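/- (Shuffle character property of the tropical non-strict signature) Let z = (z_1, z_2, …) be a sequence of real numbers, 0 ≤ s ≤ t integers, and v, w words with letters in ℤ \ {0}. Then ⟨ISS^{(idem)}_{s,t}(z), v⟩ + ⟨ISS^{(idem)}_{s,t}(z), w⟩ = min_r ⟨ISS^{(idem)}_{s,t}(z), r⟩, the minimum taken over all shuffles r of v and w, i.e. all words obtained by interleaving v and w while preserving the relative order of letters within each word (with the convention (+∞) + x = +∞). -/

import Mathlib

/-- The tropical (min-plus) **non-strict** iterated-sums signature coefficient
`⟨ISS^(idem)_{s,t}(z), w⟩ = min_{s < j_1 ≤ ⋯ ≤ j_k ≤ t} (w_1 z_{j_1} + ⋯ + w_k z_{j_k})`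
of a real sequence `z`, for a word `w` with integer letters; it takes values in
`ℝ ∪ {+∞}` (with `(+∞) + x = +∞`), is `0` on the empty word, and `+∞` when the index
set is empty. -/
noncomputable def tropISS (z : ℕ → ℝ) : ℕ → ℕ → List ℤ → WithTop ℝ
  | _, _, [] => 0
  | s, t, a :: w =>
      (Finset.Ioc s t).inf fun j => (((a : ℝ) * z j : ℝ) : WithTop ℝ) + tropISS z (j - 1) t w

/-- The multiset of all shuffles of two words: all words obtained by interleaving the
two words while preserving the relative order of letters within each word. -/
def shuffles {α : Type*} : List α → List α → Multiset (List α)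
  | [], v => {v}
  | u, [] => {u}
  | a :: u, b :: v =>
      (shuffles u (b :: v)).map (a :: ·) + (shuffles (a :: u) v).map (b :: ·)
termination_by u v => u.length + v.length

lemma tropISS_nil (z : ℕ → ℝ) (s t : ℕ) : tropISS z s t [] = 0 := by rw [tropISS]

lemma tropISS_cons (z : ℕ → ℝ) (s t : ℕ) (a : ℤ) (w : List ℤ) :
    tropISS z s t (a :: w)
      = (Finset.Ioc s t).inf fun j => (((a : ℝ) * z j : ℝ) : WithTop ℝ) + tropISS z (j - 1) t w := by
  rw [tropISS]

lemma tropISS_mono (z : ℕ → ℝ) (t : ℕ) (w : List ℤ) {s s' : ℕ} (h : s ≤ s') :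
    tropISS z s t w ≤ tropISS z s' t w := by
  cases w with
  | nil => rw [tropISS_nil, tropISS_nil]
  | cons a w =>
      rw [tropISS_cons, tropISS_cons]
      exact Finset.inf_mono (Finset.Ioc_subset_Ioc_left h)

lemma shuffles_ne_zero {α : Type*} : ∀ (u v : List α), shuffles u v ≠ 0
  | [], v => by simp [shuffles]
  | a :: u, [] => by simp [shuffles]
  | a :: u, b :: v => by
      rw [shuffles]
      intro h
      have hc := Multiset.card_eq_zero.mpr h
      rw [Multiset.card_add, Multiset.card_map, Multiset.card_map] at hc
      exact shuffles_ne_zero u (b :: v) (Multiset.card_eq_zero.mp (by omega))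
termination_by u v => u.length + v.length

lemma multiset_inf_mem {α : Type*} [LinearOrder α] [OrderTop α] (s : Multiset α) (h : s ≠ 0) :
    s.inf ∈ s := by
  induction s using Multiset.induction with
  | empty => exact absurd rfl h
  | cons a s ih =>
      rw [Multiset.inf_cons]
      rcases eq_or_ne s 0 with rfl | hs
      · simp
      · rcases le_total a s.inf with h1 | h1
        · rw [inf_eq_left.mpr h1]; exact Multiset.mem_cons_self _ _
        · rw [inf_eq_right.mpr h1]; exact Multiset.mem_cons_of_mem (ih hs)

lemma trop_key (z : ℕ → ℝ) (t : ℕ) :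
    ∀ (v w : List ℤ) (s : ℕ),
      tropISS z s t v + tropISS z s t w = ((shuffles v w).map (tropISS z s t)).inf
  | [], w, s => by simp [shuffles, tropISS_nil]
  | a :: u, [], s => by simp [shuffles, tropISS_nil]
  | a :: u, b :: x, s => by
      rw [shuffles, Multiset.map_add, Multiset.inf_add, Multiset.map_map, Multiset.map_map]
      apply le_antisymm
      · apply le_inf
        · refine Multiset.le_inf.mpr fun y hy => ?_
          rw [Multiset.mem_map] at hy
          obtain ⟨r, hr, rfl⟩ := hy
          show tropISS z s t (a :: u) + tropISS z s t (b :: x) ≤ tropISS z s t (a :: r)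
          rw [tropISS_cons z s t a r]
          refine Finset.le_inf fun j hj => ?_
          rw [Finset.mem_Ioc] at hj
          have h1 : tropISS z s t (a :: u)
              ≤ (((a : ℝ) * z j : ℝ) : WithTop ℝ) + tropISS z (j - 1) t u := by
            rw [tropISS_cons]
            exact Finset.inf_le (Finset.mem_Ioc.mpr hj)
          have h2 : tropISS z s t (b :: x) ≤ tropISS z (j - 1) t (b :: x) :=
            tropISS_mono z t _ (by omega)
          have h3 : tropISS z (j - 1) t u + tropISS z (j - 1) t (b :: x)
              ≤ tropISS z (j - 1) t r := by
            rw [trop_key z t u (b :: x) (j - 1)]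
            exact Multiset.inf_le (Multiset.mem_map_of_mem _ hr)
          calc tropISS z s t (a :: u) + tropISS z s t (b :: x)
              ≤ ((((a : ℝ) * z j : ℝ) : WithTop ℝ) + tropISS z (j - 1) t u)
                  + tropISS z (j - 1) t (b :: x) := add_le_add h1 h2
            _ = (((a : ℝ) * z j : ℝ) : WithTop ℝ)
                  + (tropISS z (j - 1) t u + tropISS z (j - 1) t (b :: x)) := add_assoc _ _ _
            _ ≤ _ := add_le_add_right h3 _
        · refine Multiset.le_inf.mpr fun y hy => ?_
          rw [Multiset.mem_map] at hy
          obtain ⟨r, hr, rfl⟩ := hy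
          show tropISS z s t (a :: u) + tropISS z s t (b :: x) ≤ tropISS z s t (b :: r)
          rw [tropISS_cons z s t b r]
          refine Finset.le_inf fun j hj => ?_
          rw [Finset.mem_Ioc] at hj
          have h1 : tropISS z s t (b :: x)
              ≤ (((b : ℝ) * z j : ℝ) : WithTop ℝ) + tropISS z (j - 1) t x := by
            rw [tropISS_cons]
            exact Finset.inf_le (Finset.mem_Ioc.mpr hj)
          have h2 : tropISS z s t (a :: u) ≤ tropISS z (j - 1) t (a :: u) :=
            tropISS_mono z t _ (by omega)
          have h3 : tropISS z (j - 1) t (a :: u) + tropISS z (j - 1) t x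
              ≤ tropISS z (j - 1) t r := by
            rw [trop_key z t (a :: u) x (j - 1)]
            exact Multiset.inf_le (Multiset.mem_map_of_mem _ hr)
          calc tropISS z s t (a :: u) + tropISS z s t (b :: x)
              ≤ tropISS z (j - 1) t (a :: u)
                  + ((((b : ℝ) * z j : ℝ) : WithTop ℝ) + tropISS z (j - 1) t x) :=
                add_le_add h2 h1
            _ = (((b : ℝ) * z j : ℝ) : WithTop ℝ)
                  + (tropISS z (j - 1) t (a :: u) + tropISS z (j - 1) t x) := by
                rw [add_left_comm]
            _ ≤ _ := add_le_add_right h3 _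
      · rcases eq_or_ne (tropISS z s t (a :: u)) ⊤ with hA | hA
        · rw [hA, top_add]; exact le_top
        rcases eq_or_ne (tropISS z s t (b :: x)) ⊤ with hB | hB
        · rw [hB, add_top]; exact le_top
        have hne : (Finset.Ioc s t).Nonempty := by
          by_contra h
          rw [Finset.not_nonempty_iff_eq_empty] at h
          exact hA (by rw [tropISS_cons, h, Finset.inf_empty])
        obtain ⟨j, hj, hAj⟩ := Finset.exists_mem_eq_inf _ hne
          (fun j => (((a : ℝ) * z j : ℝ) : WithTop ℝ) + tropISS z (j - 1) t u)
        obtain ⟨k, hk, hBk⟩ := Finset.exists_mem_eq_inf _ hne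
          (fun j => (((b : ℝ) * z j : ℝ) : WithTop ℝ) + tropISS z (j - 1) t x)
        have hA' : tropISS z s t (a :: u)
            = (((a : ℝ) * z j : ℝ) : WithTop ℝ) + tropISS z (j - 1) t u := by
          rw [tropISS_cons]; exact hAj
        have hB' : tropISS z s t (b :: x)
            = (((b : ℝ) * z k : ℝ) : WithTop ℝ) + tropISS z (k - 1) t x := by
          rw [tropISS_cons]; exact hBk
        rw [Finset.mem_Ioc] at hj hk
        rcases le_total j k with hjk | hjk
        · refine le_trans inf_le_left ?_
          have hmne : (shuffles u (b :: x)).map (tropISS z (j - 1) t) ≠ 0 := by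
            rw [Ne, Multiset.map_eq_zero]
            exact shuffles_ne_zero u (b :: x)
          obtain ⟨r₀, hr₀, hval⟩ :=
            Multiset.mem_map.mp (multiset_inf_mem _ hmne)
          have key' : tropISS z (j - 1) t u + tropISS z (j - 1) t (b :: x)
              = tropISS z (j - 1) t r₀ := by
            rw [trop_key z t u (b :: x) (j - 1), ← hval]
          have hbx : tropISS z (j - 1) t (b :: x)
              ≤ (((b : ℝ) * z k : ℝ) : WithTop ℝ) + tropISS z (k - 1) t x := by
            rw [tropISS_cons]
            exact Finset.inf_le (Finset.mem_Ioc.mpr ⟨by omega, hk.2⟩)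
          calc ((shuffles u (b :: x)).map (tropISS z s t ∘ (a :: ·))).inf
              ≤ tropISS z s t (a :: r₀) :=
                Multiset.inf_le (Multiset.mem_map_of_mem _ hr₀)
            _ ≤ (((a : ℝ) * z j : ℝ) : WithTop ℝ) + tropISS z (j - 1) t r₀ := by
                rw [tropISS_cons]
                exact Finset.inf_le (Finset.mem_Ioc.mpr hj)
            _ = (((a : ℝ) * z j : ℝ) : WithTop ℝ)
                  + (tropISS z (j - 1) t u + tropISS z (j - 1) t (b :: x)) := by rw [key']
            _ ≤ (((a : ℝ) * z j : ℝ) : WithTop ℝ)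
                  + (tropISS z (j - 1) t u
                      + ((((b : ℝ) * z k : ℝ) : WithTop ℝ) + tropISS z (k - 1) t x)) :=
                add_le_add_right (add_le_add_right hbx _) _
            _ = tropISS z s t (a :: u) + tropISS z s t (b :: x) := by
                rw [hA', hB', add_assoc]
        · refine le_trans inf_le_right ?_
          have hmne : (shuffles (a :: u) x).map (tropISS z (k - 1) t) ≠ 0 := by
            rw [Ne, Multiset.map_eq_zero]
            exact shuffles_ne_zero (a :: u) x
          obtain ⟨r₀, hr₀, hval⟩ :=
            Multiset.mem_map.mp (multiset_inf_mem _ hmne)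
          have key' : tropISS z (k - 1) t (a :: u) + tropISS z (k - 1) t x
              = tropISS z (k - 1) t r₀ := by
            rw [trop_key z t (a :: u) x (k - 1), ← hval]
          have hau : tropISS z (k - 1) t (a :: u)
              ≤ (((a : ℝ) * z j : ℝ) : WithTop ℝ) + tropISS z (j - 1) t u := by
            rw [tropISS_cons]
            exact Finset.inf_le (Finset.mem_Ioc.mpr ⟨by omega, hj.2⟩)
          calc ((shuffles (a :: u) x).map (tropISS z s t ∘ (b :: ·))).inf
              ≤ tropISS z s t (b :: r₀) :=
                Multiset.inf_le (Multiset.mem_map_of_mem _ hr₀)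
            _ ≤ (((b : ℝ) * z k : ℝ) : WithTop ℝ) + tropISS z (k - 1) t r₀ := by
                rw [tropISS_cons]
                exact Finset.inf_le (Finset.mem_Ioc.mpr hk)
            _ = (((b : ℝ) * z k : ℝ) : WithTop ℝ)
                  + (tropISS z (k - 1) t (a :: u) + tropISS z (k - 1) t x) := by rw [key']
            _ ≤ (((b : ℝ) * z k : ℝ) : WithTop ℝ)
                  + (((((a : ℝ) * z j : ℝ) : WithTop ℝ) + tropISS z (j - 1) t u)
                      + tropISS z (k - 1) t x) :=
                add_le_add_right (add_le_add_left hau _) _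
            _ = tropISS z s t (a :: u) + tropISS z s t (b :: x) := by
                rw [hA', hB', add_left_comm]
            
termination_by v w => v.length + w.length

/-- **Shuffle character property of the tropical non-strict signature.** For a real
sequence `z`, integers `0 ≤ s ≤ t`, and words `v, w` with letters in `ℤ \ {0}`:
`⟨ISS^(idem)_{s,t}(z), v⟩ + ⟨ISS^(idem)_{s,t}(z), w⟩ = min_r ⟨ISS^(idem)_{s,t}(z), r⟩`,
the minimum over all shuffles `r` of `v` and `w`. -/
theorem trop_issi_shuffle_character (z : ℕ → ℝ) (s t : ℕ) (hst : s ≤ t)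
    (v w : List ℤ) (hv : ∀ a ∈ v, a ≠ 0) (hw : ∀ a ∈ w, a ≠ 0) :
    tropISS z s t v + tropISS z s t w = ((shuffles v w).map (tropISS z s t)).inf :=
  trop_key z t v w s
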